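/- Let 0<p<1, let {e_1,...,e_n} be the canonical basis of R^n, and let Q = (a_1,...,a_n) ∈ R^n be nonzero. Define K = {λ ∈ R^n : λ_i ≥ 0, ∑λ_i^p ≤ 1}, μ(λ) = (1 - ∑λ_i^p)^{1/p}, and φ: K → R^n by φ(λ) = ∑λ_i e_i + μ(λ) Q. Then the Jacobian determinant of φ at an interior point λ of K equals 1 - ∑_{i=1}^n a_i (μ(λ)/λ_i)^{1-p}. -/

import Mathlib

open Finset
theorem jacobian_formula (p : ℝ) (hp0 : 0 < p) (hp1 : p < 1) (n : ℕ)
    (a : Fin n → ℝ) (ha : a ≠ 0) (l : Fin n → ℝ)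
    (hl : ∀ i, 0 < l i) (hint : (∑ i, l i ^ p) < 1) :
    LinearMap.det
        ((fderiv ℝ (fun t : Fin n → ℝ =>
            t + ((1 - ∑ i, t i ^ p) ^ (1 / p)) • a) l :
          (Fin n → ℝ) →L[ℝ] (Fin n → ℝ)) : (Fin n → ℝ) →ₗ[ℝ] (Fin n → ℝ)) =
      1 - ∑ i, a i * (((1 - ∑ j, l j ^ p) ^ (1 / p)) / l i) ^ (1 - p) := by
  set S : ℝ := ∑ i, l i ^ p with hS
  have hS1 : (0:ℝ) < 1 - S := by linarith
  -- derivative of the sum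
  have h1 : HasFDerivAt (fun t : Fin n → ℝ => ∑ i, t i ^ p)
      (∑ i, (p * l i ^ (p - 1)) • (ContinuousLinearMap.proj i :
        (Fin n → ℝ) →L[ℝ] ℝ)) l := by
    apply HasFDerivAt.fun_sum
    intro i _
    have hproj : HasFDerivAt (fun t : Fin n → ℝ => t i)
        (ContinuousLinearMap.proj i : (Fin n → ℝ) →L[ℝ] ℝ) l :=
      (ContinuousLinearMap.proj i : (Fin n → ℝ) →L[ℝ] ℝ).hasFDerivAt
    exact (Real.hasDerivAt_rpow_const (Or.inl (hl i).ne')).comp_hasFDerivAt l hproj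
  set D1 : (Fin n → ℝ) →L[ℝ] ℝ :=
    ∑ i, (p * l i ^ (p - 1)) • (ContinuousLinearMap.proj i :
      (Fin n → ℝ) →L[ℝ] ℝ) with hD1
  have h2 : HasFDerivAt (fun t : Fin n → ℝ => 1 - ∑ i, t i ^ p) (-D1) l := by
    simpa using (hasFDerivAt_const (1:ℝ) l).fun_sub h1
  have h3 : HasFDerivAt (fun t : Fin n → ℝ => (1 - ∑ i, t i ^ p) ^ (1/p))
      ((1/p * (1 - S) ^ (1/p - 1)) • (-D1)) l := by
    have := (Real.hasDerivAt_rpow_const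
        (p := 1/p) (x := 1 - S) (Or.inl hS1.ne')).comp_hasFDerivAt l h2
    simpa [Function.comp_def] using this
  set Dg : (Fin n → ℝ) →L[ℝ] ℝ := (1/p * (1 - S) ^ (1/p - 1)) • (-D1) with hDg
  have hphi : HasFDerivAt (fun t : Fin n → ℝ =>
      t + ((1 - ∑ i, t i ^ p) ^ (1 / p)) • a)
      (ContinuousLinearMap.id ℝ (Fin n → ℝ) + Dg.smulRight a) l :=
    (hasFDerivAt_id l).add (h3.smul_const a)
  rw [hphi.fderiv]
  -- the coefficient vector
  set w : Fin n → ℝ := fun j => -((1 - S) ^ (1/p - 1) * l j ^ (p - 1)) with hw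
  have hDgapp : ∀ v : Fin n → ℝ, Dg v = ∑ j, w j * v j := by
    intro v
    simp only [hDg, hD1, hw, ContinuousLinearMap.smul_apply,
      ContinuousLinearMap.neg_apply, ContinuousLinearMap.sum_apply,
      ContinuousLinearMap.smul_apply, ContinuousLinearMap.proj_apply,
      smul_eq_mul]
    have hp : p ≠ 0 := hp0.ne'
    rw [mul_neg, Finset.mul_sum, ← Finset.sum_neg_distrib]
    apply Finset.sum_congr rfl
    intro j _
    field_simp
  -- identify the linear map with a matrix
  have hmat : ((ContinuousLinearMap.id ℝ (Fin n → ℝ) + Dg.smulRight a :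
      (Fin n → ℝ) →L[ℝ] (Fin n → ℝ)) : (Fin n → ℝ) →ₗ[ℝ] (Fin n → ℝ)) =
      Matrix.toLin' (1 + Matrix.replicateCol Unit a * Matrix.replicateRow Unit w) := by
    apply LinearMap.ext
    intro v
    funext i
    rw [Matrix.toLin'_apply, Matrix.add_mulVec, Matrix.one_mulVec]
    have : Matrix.mulVec (Matrix.replicateCol Unit a * Matrix.replicateRow Unit w) v i = a i * ∑ j, w j * v j := by
      simp [Matrix.mulVec, Matrix.mul_apply, dotProduct, Finset.mul_sum]
      apply Finset.sum_congr rfl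
      intro j _
      ring
    simp only [ContinuousLinearMap.coe_coe, ContinuousLinearMap.add_apply,
      ContinuousLinearMap.coe_id', id_eq, ContinuousLinearMap.smulRight_apply,
      Pi.add_apply, Pi.smul_apply, smul_eq_mul, this, hDgapp v]
    ring
  rw [hmat, LinearMap.det_toLin', Matrix.det_one_add_replicateCol_mul_replicateRow]
  -- final computation
  rw [sub_eq_add_neg, ← Finset.sum_neg_distrib]
  congr 1
  simp only [dotProduct]
  apply Finset.sum_congr rfl
  intro i _
  have hli := hl i
  have hmu : (0:ℝ) ≤ (1 - S) ^ (1/p) := Real.rpow_nonneg hS1.le _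
  have hdiv : ((1 - S) ^ (1/p) / l i) ^ (1 - p)
      = ((1 - S) ^ (1/p)) ^ (1 - p) / l i ^ (1 - p) :=
    Real.div_rpow hmu hli.le _
  have h1' : ((1 - S) ^ (1/p)) ^ (1 - p) = (1 - S) ^ (1/p - 1) := by
    rw [← Real.rpow_mul hS1.le]
    congr 1
    field_simp
  have h2' : l i ^ (p - 1) = (l i ^ (1 - p))⁻¹ := by
    rw [← Real.rpow_neg hli.le]
    congr 1
    ring
  rw [hw]
  simp only
  rw [hdiv, h1', h2', div_eq_mul_inv]
  ring
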